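/- Fix a monomial order ≺ on ℕ^p whose initial segments are finite. Let p ≥ 2, let h be an integer with h > 1, let k ∈ {1, …, p−1}, and let S be the submonoid of ℕ^p generated by {e₁, …, e_{p−1}, 2e_p, 3e_p, e_p + h·e_k} ∪ {e_p + e_i : i ∈ {1, …, p−1}, i ≠ k}. Then S is an ℕ^p-semigroup satisfying the extended Wilf conjecture: n(S)·e(S) ≥ N(Fb(S)) + 1. -/

import Mathlib

/-- `S ⊆ ℕ^p` contains `0` and is closed under addition. -/
def IsSubmonoidSet {p : ℕ} (S : Set (Fin p → ℕ)) : Prop :=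
  (0 : Fin p → ℕ) ∈ S ∧ ∀ x ∈ S, ∀ y ∈ S, x + y ∈ S

/-- `s` is a minimal generator of `S`: it is a nonzero element of `S` that is not a
sum of two nonzero elements of `S`. -/
def IsMinGen {p : ℕ} (S : Set (Fin p → ℕ)) (s : Fin p → ℕ) : Prop :=
  s ∈ S ∧ s ≠ 0 ∧ ∀ a ∈ S, ∀ b ∈ S, a ≠ 0 → b ≠ 0 → a + b ≠ s

/-- The (unique) minimal generating set of `S`. -/
def minGens {p : ℕ} (S : Set (Fin p → ℕ)) : Set (Fin p → ℕ) :=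
  {s | IsMinGen S s}

/-- `prec` is (the strict part of) a monomial order on `ℕ^p` all of whose initial
segments are finite. -/
def IsMonomialOrder {p : ℕ} (prec : (Fin p → ℕ) → (Fin p → ℕ) → Prop) : Prop :=
  (∀ a, ¬ prec a a) ∧
  (∀ a b c, prec a b → prec b c → prec a c) ∧
  (∀ a b, a ≠ b → prec a b ∨ prec b a) ∧
  (∀ a b c, prec a b → prec (a + c) (b + c)) ∧
  (∀ c, c ≠ (0 : Fin p → ℕ) → prec 0 c) ∧
  (∀ a, {b | prec b a}.Finite)

/-- The generating set
$\{e_1,…,e_{p-1},2e_p,3e_p,e_p+he_k\} ∪ \{e_p+e_i \mid i ∈ [p-1]\setminus\{k\}\}$,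
where the distinguished index $p$ corresponds to $⟨p-1,\_⟩ : \mathrm{Fin}\ p$. -/
def gens9 (p h : ℕ) (hp : 2 ≤ p) (k : Fin p) : Set (Fin p → ℕ) :=
  ({x | ∃ j : Fin p, j ≠ ⟨p - 1, by omega⟩ ∧ x = Pi.single j 1}
      ∪ {(2 : ℕ) • Pi.single (⟨p - 1, by omega⟩ : Fin p) 1,
          (3 : ℕ) • Pi.single (⟨p - 1, by omega⟩ : Fin p) 1,
          Pi.single (⟨p - 1, by omega⟩ : Fin p) 1 + h • Pi.single k 1})
    ∪ {x | ∃ j : Fin p, j ≠ ⟨p - 1, by omega⟩ ∧ j ≠ k ∧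
        x = Pi.single (⟨p - 1, by omega⟩ : Fin p) 1 + Pi.single j 1}

namespace Stmt10Aux

lemma single_nsmul {p : ℕ} (n : ℕ) (j : Fin p) :
    n • (Pi.single j 1 : Fin p → ℕ) = Pi.single j n := by
  funext i; by_cases hi : i = j <;> simp [hi, Pi.single_apply]

variable {p : ℕ} (hp : 2 ≤ p) (h : ℕ) (k : Fin p)

lemma g_single (j : Fin p) (hj : j ≠ ⟨p - 1, by omega⟩) :
    (Pi.single j 1 : Fin p → ℕ) ∈ gens9 p h hp k :=
  Set.mem_union_left _ (Set.mem_union_left _ ⟨j, hj, rfl⟩)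

lemma g_two :
    (2 : ℕ) • (Pi.single (⟨p - 1, by omega⟩ : Fin p) 1 : Fin p → ℕ) ∈ gens9 p h hp k :=
  Set.mem_union_left _ (Set.mem_union_right _ (Set.mem_insert _ _))

lemma g_three :
    (3 : ℕ) • (Pi.single (⟨p - 1, by omega⟩ : Fin p) 1 : Fin p → ℕ) ∈ gens9 p h hp k :=
  Set.mem_union_left _ (Set.mem_union_right _
    (Set.mem_insert_of_mem _ (Set.mem_insert _ _)))

lemma g_four :
    (Pi.single (⟨p - 1, by omega⟩ : Fin p) 1 : Fin p → ℕ) + h • Pi.single k 1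
      ∈ gens9 p h hp k :=
  Set.mem_union_left _ (Set.mem_union_right _
    (Set.mem_insert_of_mem _ (Set.mem_insert_of_mem _ rfl)))

lemma g_five (j : Fin p) (hj1 : j ≠ ⟨p - 1, by omega⟩) (hj2 : j ≠ k) :
    (Pi.single (⟨p - 1, by omega⟩ : Fin p) 1 : Fin p → ℕ) + Pi.single j 1
      ∈ gens9 p h hp k :=
  Set.mem_union_right _ ⟨j, hj1, hj2, rfl⟩

/-- The candidate submonoid. -/
def T : AddSubmonoid (Fin p → ℕ) where
  carrier := {x | x ⟨p - 1, by omega⟩ ≠ 1 ∨ h ≤ x k ∨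
      ∃ j : Fin p, j ≠ ⟨p - 1, by omega⟩ ∧ j ≠ k ∧ 1 ≤ x j}
  zero_mem' := Or.inl (by simp)
  add_mem' := by
    intro a b ha hb
    set L : Fin p := ⟨p - 1, by omega⟩
    by_cases hab : (a + b) L = 1
    · have hab' : a L + b L = 1 := hab
      have : a L = 1 ∨ b L = 1 := by omega
      rcases this with h1 | h1
      · rcases ha with h2 | h2 | ⟨j, hj1, hj2, hj3⟩
        · exact absurd h1 h2
        · exact Or.inr (Or.inl (le_trans h2 (by simp)))
        · exact Or.inr (Or.inr ⟨j, hj1, hj2, le_trans hj3 (by simp)⟩)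
      · rcases hb with h2 | h2 | ⟨j, hj1, hj2, hj3⟩
        · exact absurd h1 h2
        · exact Or.inr (Or.inl (le_trans h2 (by simp)))
        · exact Or.inr (Or.inr ⟨j, hj1, hj2, le_trans hj3 (by simp)⟩)
    · exact Or.inl hab

lemma mem_of_last_eq_zero (x : Fin p → ℕ) (hx : x ⟨p - 1, by omega⟩ = 0) :
    x ∈ AddSubmonoid.closure (gens9 p h hp k) := by
  set L : Fin p := ⟨p - 1, by omega⟩
  rw [← Finset.univ_sum_single x]
  apply AddSubmonoid.sum_mem
  intro j _
  by_cases hj : j = L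
  · subst hj; rw [hx]; simp
  · rw [← single_nsmul (x j) j]
    exact AddSubmonoid.nsmul_mem _
      (AddSubmonoid.subset_closure (g_single hp h k j hj)) _

lemma smul_last_mem (m : ℕ) (hm : m ≠ 1) :
    m • (Pi.single (⟨p - 1, by omega⟩ : Fin p) 1 : Fin p → ℕ)
      ∈ AddSubmonoid.closure (gens9 p h hp k) := by
  set L : Fin p := ⟨p - 1, by omega⟩
  set s : Fin p → ℕ := Pi.single L 1 with hs
  have h2 : (2 : ℕ) • s ∈ AddSubmonoid.closure (gens9 p h hp k) :=
    AddSubmonoid.subset_closure (g_two hp h k)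
  have h3 : (3 : ℕ) • s ∈ AddSubmonoid.closure (gens9 p h hp k) :=
    AddSubmonoid.subset_closure (g_three hp h k)
  rcases Nat.even_or_odd m with ⟨a, ha⟩ | ho
  · have : m = a * 2 := by omega
    rw [this, mul_smul]
    exact AddSubmonoid.nsmul_mem _ h2 a
  · obtain ⟨a, ha⟩ : ∃ a, m = a * 2 + 3 := ⟨(m - 3) / 2, by
      rcases ho with ⟨c, hc⟩; omega⟩
    rw [ha, add_smul, mul_smul]
    exact AddSubmonoid.add_mem _ (AddSubmonoid.nsmul_mem _ h2 a) h3

lemma mem_closure_iff (hk : k ≠ (⟨p - 1, by omega⟩ : Fin p)) (x : Fin p → ℕ) :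
    x ∈ AddSubmonoid.closure (gens9 p h hp k) ↔
      (x ⟨p - 1, by omega⟩ ≠ 1 ∨ h ≤ x k ∨
        ∃ j : Fin p, j ≠ ⟨p - 1, by omega⟩ ∧ j ≠ k ∧ 1 ≤ x j) := by
  set L : Fin p := ⟨p - 1, by omega⟩ with hLdef
  constructor
  · intro hx
    have hsub : gens9 p h hp k ⊆ (T hp h k : Set (Fin p → ℕ)) := by
      rintro y ((⟨j, hj, rfl⟩ | hy) | ⟨j, hj1, hj2, rfl⟩)
      · left
        simp [Pi.single_apply, Ne.symm hj]
      · rcases hy with rfl | rfl | rfl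
        · left; simp [Pi.single_apply]
        · left; simp [Pi.single_apply]
        · right; left; simp [Pi.single_apply, Ne.symm hk]
      · right; right
        exact ⟨j, hj1, hj2, by simp [Pi.single_apply, Ne.symm hj1]⟩
    exact AddSubmonoid.closure_le.mpr hsub hx
  · intro hx
    by_cases h1 : x L = 1
    · rcases hx with h' | h2 | ⟨j, hj1, hj2, hj3⟩
      · exact absurd h1 h'
      · set y : Fin p → ℕ := Function.update (Function.update x k (x k - h)) L 0 with hy
        have hdec : x = (Pi.single L 1 + h • Pi.single k 1) + y := by
          funext i
          by_cases hi : i = L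
          · subst hi
            simp [hy, Function.update_apply, Pi.single_apply, Ne.symm hk, h1]
          · by_cases hik : i = k
            · subst hik
              simp [hy, Function.update_apply, Pi.single_apply, Ne.symm hk, hi]
              omega
            · simp [hy, Function.update_apply, Pi.single_apply, hi, hik]
        rw [hdec]
        refine AddSubmonoid.add_mem _
          (AddSubmonoid.subset_closure (g_four hp h k))
          (mem_of_last_eq_zero hp h k y (by simp [hy, hLdef]))
      · set y : Fin p → ℕ := Function.update (Function.update x j (x j - 1)) L 0 with hy
        have hdec : x = (Pi.single L 1 + Pi.single j 1) + y := by
          funext i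
          by_cases hi : i = L
          · subst hi
            simp [hy, Function.update_apply, Pi.single_apply, Ne.symm hj1, h1]
          · by_cases hij : i = j
            · subst hij
              simp [hy, Function.update_apply, Pi.single_apply, hi, Ne.symm hj1]
              omega
            · simp [hy, Function.update_apply, Pi.single_apply, hi, hij]
        rw [hdec]
        refine AddSubmonoid.add_mem _
          (AddSubmonoid.subset_closure (g_five hp h k j hj1 hj2))
          (mem_of_last_eq_zero hp h k y (by simp [hy, hLdef]))
    · by_cases h0 : x L = 0
      · exact mem_of_last_eq_zero hp h k x h0
      · have hdec : x = Function.update x L 0 + (x L) • Pi.single L 1 := by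
          funext i
          by_cases hi : i = L <;>
            simp [hi, Function.update_apply, Pi.single_apply]
        rw [hdec]
        exact AddSubmonoid.add_mem _
          (mem_of_last_eq_zero hp h k _ (by simp [hLdef]))
          (smul_last_mem hp h k _ h1)


lemma closure_decomp {M : Type*} [AddCommMonoid M] (G : Set M) {s : M}
    (hs : s ∈ AddSubmonoid.closure G) :
    s = 0 ∨ s ∈ G ∨ ∃ a ∈ AddSubmonoid.closure G, ∃ b ∈ AddSubmonoid.closure G,
      a ≠ 0 ∧ b ≠ 0 ∧ a + b = s := by
  induction hs using AddSubmonoid.closure_induction with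
  | mem x hx => exact Or.inr (Or.inl hx)
  | zero => exact Or.inl rfl
  | add x y hx hy ihx ihy =>
    rcases eq_or_ne x 0 with rfl | hx0
    · simpa using ihy
    rcases eq_or_ne y 0 with rfl | hy0
    · simpa using ihx
    exact Or.inr (Or.inr ⟨x, hx, y, hy, hx0, hy0, rfl⟩)

lemma minGens_subset (G : Set (Fin p → ℕ)) :
    minGens ((AddSubmonoid.closure G : AddSubmonoid (Fin p → ℕ)) : Set (Fin p → ℕ)) ⊆ G := by
  rintro s ⟨hsS, hs0, hmin⟩
  rcases closure_decomp G hsS with rfl | hsG | ⟨a, ha, b, hb, ha0, hb0, hab⟩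
  · exact absurd rfl hs0
  · exact hsG
  · exact absurd hab (hmin a ha b hb ha0 hb0)

lemma gens9_finite : (gens9 p h hp k).Finite := by
  refine Set.Finite.union (Set.Finite.union ?_ ?_) ?_
  · refine (Set.finite_range (fun j : Fin p => (Pi.single j 1 : Fin p → ℕ))).subset ?_
    rintro y ⟨j, _, rfl⟩; exact ⟨j, rfl⟩
  · exact ((Set.finite_singleton _).insert _).insert _
  · refine (Set.finite_range (fun j : Fin p =>
      (Pi.single (⟨p - 1, by omega⟩ : Fin p) 1 + Pi.single j 1 : Fin p → ℕ))).subset ?_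
    rintro y ⟨j, _, _, rfl⟩; exact ⟨j, rfl⟩

end Stmt10Aux

theorem stmt10 {p : ℕ} (hp : 2 ≤ p)
    (prec : (Fin p → ℕ) → (Fin p → ℕ) → Prop) (hprec : IsMonomialOrder prec)
    (h : ℕ) (hh : 1 < h) (k : Fin p) (hk : (k : ℕ) < p - 1)
    (Fb : Fin p → ℕ)
    (hFb : Fb ∉ AddSubmonoid.closure (gens9 p h hp k) ∧
      ∀ x : Fin p → ℕ, x ∉ AddSubmonoid.closure (gens9 p h hp k) → x ≠ Fb → prec x Fb) :
    {x : Fin p → ℕ | x ∉ AddSubmonoid.closure (gens9 p h hp k)}.Finite ∧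
    {x : Fin p → ℕ | x ∈ AddSubmonoid.closure (gens9 p h hp k) ∧ prec x Fb}.ncard
        + {x : Fin p → ℕ | x ∉ AddSubmonoid.closure (gens9 p h hp k)}.ncard + 1
      ≤ {x : Fin p → ℕ | x ∈ AddSubmonoid.closure (gens9 p h hp k) ∧ prec x Fb}.ncard
        * (minGens ((AddSubmonoid.closure (gens9 p h hp k) : AddSubmonoid (Fin p → ℕ)) :
            Set (Fin p → ℕ))).ncard := by
  obtain ⟨hirr, htrans, htot, hadd, hzero, hfin⟩ := hprec
  set S := AddSubmonoid.closure (gens9 p h hp k) with hSdef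
  set L : Fin p := ⟨p - 1, by omega⟩ with hLdef
  have hkL : k ≠ L := by
    intro hkl
    rw [hLdef] at hkl
    have : (k : ℕ) = p - 1 := by rw [hkl]
    omega
  have hLk : L ≠ k := Ne.symm hkL
  have hchar : ∀ x : Fin p → ℕ, x ∈ S ↔
      (x L ≠ 1 ∨ h ≤ x k ∨ ∃ j : Fin p, j ≠ L ∧ j ≠ k ∧ 1 ≤ x j) :=
    fun x => Stmt10Aux.mem_closure_iff hp h k hkL x
  have hgap : ∀ x : Fin p → ℕ, x ∉ S ↔
      (x L = 1 ∧ x k < h ∧ ∀ j : Fin p, j ≠ L → j ≠ k → x j = 0) := by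
    intro x
    rw [hchar x]
    push_neg
    constructor
    · rintro ⟨h1, h2, h3⟩
      exact ⟨h1, h2, fun j hj1 hj2 => by have := h3 j hj1 hj2; omega⟩
    · rintro ⟨h1, h2, h3⟩
      exact ⟨h1, h2, fun j hj1 hj2 => by have := h3 j hj1 hj2; omega⟩
  -- the gap set as a finset
  set GF : Finset (Fin p → ℕ) :=
    (Finset.range h).image (fun t => (Pi.single L 1 + Pi.single k t : Fin p → ℕ)) with hGFdef
  have hgapset : {x : Fin p → ℕ | x ∉ S} = ↑GF := by
    ext x
    simp only [Set.mem_setOf_eq, hGFdef, Finset.coe_image, Set.mem_image, Finset.mem_coe,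
      Finset.mem_range]
    constructor
    · intro hx
      obtain ⟨h1, h2, h3⟩ := (hgap x).mp hx
      refine ⟨x k, h2, funext fun i => ?_⟩
      by_cases hi : i = L
      · subst hi; simp [Pi.single_eq_same, Pi.single_eq_of_ne hLk, h1]
      · by_cases hik : i = k
        · subst hik; simp [Pi.single_eq_same, Pi.single_eq_of_ne hkL]
        · simp [Pi.single_eq_of_ne hi, Pi.single_eq_of_ne hik, h3 i hi hik]
    · rintro ⟨t, ht, rfl⟩
      rw [hgap]
      refine ⟨by simp [Pi.single_eq_same, Pi.single_eq_of_ne hLk], ?_, ?_⟩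
      · simpa [Pi.single_eq_same, Pi.single_eq_of_ne hkL] using ht
      · intro j hj1 hj2
        simp [Pi.single_eq_of_ne hj1, Pi.single_eq_of_ne hj2]
  have hgfin : {x : Fin p → ℕ | x ∉ S}.Finite := by
    rw [hgapset]; exact GF.finite_toSet
  have hginj : Function.Injective (fun t => (Pi.single L 1 + Pi.single k t : Fin p → ℕ)) := by
    intro t t' htt
    have := congrFun htt k
    simpa [Pi.single_eq_same, Pi.single_eq_of_ne hkL] using this
  have hgcard : {x : Fin p → ℕ | x ∉ S}.ncard = h := by
    rw [hgapset, Set.ncard_coe_finset, hGFdef, Finset.card_image_of_injective _ hginj,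
      Finset.card_range]
  -- Fb structure
  obtain ⟨hFbL, hFbk, hFb0⟩ := (hgap Fb).mp hFb.1
  have hFbk' : Fb k = h - 1 := by
    by_contra hne
    have hlt : Fb k < h - 1 := by omega
    have hyS : (Pi.single L 1 + Pi.single k (h - 1) : Fin p → ℕ) ∉ S := by
      rw [hgap]
      refine ⟨by simp [Pi.single_eq_same, Pi.single_eq_of_ne hLk], ?_, ?_⟩
      · simp [Pi.single_eq_same, Pi.single_eq_of_ne hkL]; omega
      · intro j hj1 hj2
        simp [Pi.single_eq_of_ne hj1, Pi.single_eq_of_ne hj2]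
    have hyFb : (Pi.single L 1 + Pi.single k (h - 1) : Fin p → ℕ) ≠ Fb := by
      intro he
      have := congrFun he k
      simp [Pi.single_eq_same, Pi.single_eq_of_ne hkL] at this
      omega
    have h1 : prec (Pi.single L 1 + Pi.single k (h - 1)) Fb := hFb.2 _ hyS hyFb
    have hc0 : (Pi.single k (h - 1 - Fb k) : Fin p → ℕ) ≠ 0 := by
      intro h0
      have := congrFun h0 k
      simp [Pi.single_eq_same] at this
      omega
    have h2 := hadd 0 (Pi.single k (h - 1 - Fb k)) Fb (hzero _ hc0)
    have h3 : (Pi.single k (h - 1 - Fb k) : Fin p → ℕ) + Fb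
        = Pi.single L 1 + Pi.single k (h - 1) := by
      funext i
      by_cases hi : i = L
      · subst hi
        simp [Pi.single_eq_same, Pi.single_eq_of_ne hLk, hFbL]
      · by_cases hik : i = k
        · subst hik
          simp [Pi.single_eq_same, Pi.single_eq_of_ne hkL]
          omega
        · simp [Pi.single_eq_of_ne hi, Pi.single_eq_of_ne hik, hFb0 i hi hik]
    rw [zero_add, h3] at h2
    exact hirr Fb (htrans _ _ _ h2 h1)
  -- the set counted by n(S)
  set A : Set (Fin p → ℕ) := {x | x ∈ S ∧ prec x Fb} with hAdef
  have hAfin : A.Finite := (hfin Fb).subset (fun x hx => hx.2)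
  have hA : h ≤ A.ncard := by
    set BF : Finset (Fin p → ℕ) :=
      (Finset.range h).image (fun t => (Pi.single k t : Fin p → ℕ)) with hBFdef
    have hBsub : ↑BF ⊆ A := by
      intro x hx
      simp only [hBFdef, Finset.coe_image, Set.mem_image, Finset.mem_coe,
        Finset.mem_range] at hx
      obtain ⟨t, ht, rfl⟩ := hx
      constructor
      · rw [hchar]
        exact Or.inl (by simp [Pi.single_eq_of_ne hLk])
      · have hc0 : (Pi.single L 1 + Pi.single k (h - 1 - t) : Fin p → ℕ) ≠ 0 := by
          intro h0
          have := congrFun h0 L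
          simp [Pi.single_eq_same, Pi.single_eq_of_ne hLk] at this
        have h2 := hadd 0 _ (Pi.single k t) (hzero _ hc0)
        have h3 : (Pi.single L 1 + Pi.single k (h - 1 - t) : Fin p → ℕ) + Pi.single k t
            = Fb := by
          funext i
          by_cases hi : i = L
          · subst hi
            simp [Pi.single_eq_same, Pi.single_eq_of_ne hLk, hFbL]
          · by_cases hik : i = k
            · subst hik
              simp [Pi.single_eq_same, Pi.single_eq_of_ne hkL, hFbk']
              omega
            · simp [Pi.single_eq_of_ne hi, Pi.single_eq_of_ne hik, hFb0 i hi hik]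
        rwa [zero_add, h3] at h2
    have hBinj : Function.Injective (fun t => (Pi.single k t : Fin p → ℕ)) := by
      intro t t' htt
      have := congrFun htt k
      simpa [Pi.single_eq_same] using this
    calc h = BF.card := by
            rw [hBFdef, Finset.card_image_of_injective _ hBinj, Finset.card_range]
      _ = (↑BF : Set (Fin p → ℕ)).ncard := (Set.ncard_coe_finset BF).symm
      _ ≤ A.ncard := Set.ncard_le_ncard hBsub hAfin
  -- minimal generators
  set M : Set (Fin p → ℕ) := minGens (S : Set (Fin p → ℕ)) with hMdef
  have hMfin : M.Finite :=
    (Stmt10Aux.gens9_finite hp h k).subset (Stmt10Aux.minGens_subset _)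
  have heL : (Pi.single L 1 : Fin p → ℕ) ∉ S := by
    rw [hgap]
    refine ⟨by simp, by simp [Pi.single_eq_of_ne hkL]; omega, ?_⟩
    intro j hj1 _
    simp [Pi.single_eq_of_ne hj1]
  have hone : ∀ a : Fin p → ℕ, a ∈ S → a L = 1 → (∀ i : Fin p, i ≠ L → a i = 0) → False := by
    intro a haS h1 h0
    have : a = Pi.single L 1 := by
      funext i
      by_cases hi : i = L
      · subst hi; simp [Pi.single_eq_same, h1]
      · simp [Pi.single_eq_of_ne hi, h0 i hi]
    exact heL (this ▸ haS)
  have hsupp : ∀ (a b : Fin p → ℕ) (v : Fin p → ℕ) (j : Fin p), a + b = v →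
      (∀ i : Fin p, i ≠ j → v i = 0) → a ≠ 0 → 1 ≤ a j ∧ (∀ i : Fin p, i ≠ j → a i = 0) := by
    intro a b v j hab hv ha0
    have hco : ∀ i, a i + b i = v i := fun i => congrFun hab i
    have h2 : ∀ i : Fin p, i ≠ j → a i = 0 := by
      intro i hi
      have := hco i
      have := hv i hi
      omega
    refine ⟨?_, h2⟩
    by_contra hja
    apply ha0
    funext i
    by_cases hi : i = j
    · subst hi; simp; omega
    · simp [h2 i hi]
  have hm1 : Pi.single k 1 ∈ M := by
    refine ⟨(hchar _).mpr (Or.inl (by simp [Pi.single_eq_of_ne hLk])), ?_, ?_⟩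
    · intro h0
      have := congrFun h0 k
      simp [Pi.single_eq_same] at this
    · intro a haS b hbS ha0 hb0 hab
      have hva : ∀ i : Fin p, i ≠ k → (Pi.single k 1 : Fin p → ℕ) i = 0 :=
        fun i hi => Pi.single_eq_of_ne hi 1
      obtain ⟨ha1, _⟩ := hsupp a b _ k hab hva ha0
      obtain ⟨hb1, _⟩ := hsupp b a _ k (by rwa [add_comm]) hva hb0
      have := congrFun hab k
      simp [Pi.single_eq_same] at this
      omega
  have hm2 : (Pi.single L 2 : Fin p → ℕ) ∈ M := by
    have hmem : (Pi.single L 2 : Fin p → ℕ) ∈ S := by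
      have := AddSubmonoid.subset_closure (Stmt10Aux.g_two hp h k)
      rwa [Stmt10Aux.single_nsmul] at this
    refine ⟨hmem, ?_, ?_⟩
    · intro h0
      have := congrFun h0 L
      simp [Pi.single_eq_same] at this
    · intro a haS b hbS ha0 hb0 hab
      have hva : ∀ i : Fin p, i ≠ L → (Pi.single L 2 : Fin p → ℕ) i = 0 :=
        fun i hi => Pi.single_eq_of_ne hi 2
      obtain ⟨ha1, ha2⟩ := hsupp a b _ L hab hva ha0
      obtain ⟨hb1, hb2⟩ := hsupp b a _ L (by rwa [add_comm]) hva hb0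
      have hsum := congrFun hab L
      simp [Pi.single_eq_same] at hsum
      have haL : a L = 1 := by omega
      exact hone a haS haL ha2
  have hm3 : (Pi.single L 3 : Fin p → ℕ) ∈ M := by
    have hmem : (Pi.single L 3 : Fin p → ℕ) ∈ S := by
      have := AddSubmonoid.subset_closure (Stmt10Aux.g_three hp h k)
      rwa [Stmt10Aux.single_nsmul] at this
    refine ⟨hmem, ?_, ?_⟩
    · intro h0
      have := congrFun h0 L
      simp [Pi.single_eq_same] at this
    · intro a haS b hbS ha0 hb0 hab
      have hva : ∀ i : Fin p, i ≠ L → (Pi.single L 3 : Fin p → ℕ) i = 0 :=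
        fun i hi => Pi.single_eq_of_ne hi 3
      obtain ⟨ha1, ha2⟩ := hsupp a b _ L hab hva ha0
      obtain ⟨hb1, hb2⟩ := hsupp b a _ L (by rwa [add_comm]) hva hb0
      have hsum := congrFun hab L
      simp [Pi.single_eq_same] at hsum
      have : a L = 1 ∨ b L = 1 := by omega
      rcases this with h1 | h1
      · exact hone a haS h1 ha2
      · exact hone b hbS h1 hb2
  have d12 : (Pi.single k 1 : Fin p → ℕ) ≠ Pi.single L 2 := by
    intro he
    have := congrFun he k
    simp [Pi.single_eq_same, Pi.single_eq_of_ne hkL] at this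
  have d13 : (Pi.single k 1 : Fin p → ℕ) ≠ Pi.single L 3 := by
    intro he
    have := congrFun he k
    simp [Pi.single_eq_same, Pi.single_eq_of_ne hkL] at this
  have d23 : (Pi.single L 2 : Fin p → ℕ) ≠ Pi.single L 3 := by
    intro he
    have := congrFun he L
    simp [Pi.single_eq_same] at this
  have hM3 : 3 ≤ M.ncard := by
    have hsub3 : ({Pi.single k 1, Pi.single L 2, Pi.single L 3} : Set (Fin p → ℕ)) ⊆ M := by
      rintro x (rfl | rfl | rfl)
      exacts [hm1, hm2, hm3]
    have hc3 : ({Pi.single k 1, Pi.single L 2, Pi.single L 3} : Set (Fin p → ℕ)).ncard = 3 := by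
      rw [Set.ncard_insert_of_notMem (by simp [d12, d13])
        ((Set.finite_singleton _).insert _), Set.ncard_pair d23]
    calc 3 = ({Pi.single k 1, Pi.single L 2, Pi.single L 3} : Set (Fin p → ℕ)).ncard := hc3.symm
      _ ≤ M.ncard := Set.ncard_le_ncard hsub3 hMfin
  refine ⟨hgfin, ?_⟩
  rw [hgcard]
  calc A.ncard + h + 1 ≤ A.ncard * 3 := by omega
    _ ≤ A.ncard * M.ncard := Nat.mul_le_mul_left _ hM3
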